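/- Let ρ, J : ℝ → ℝ be twice differentiable with ψ = ρ′, let H₀ be the distribution of (x, y) ∈ ℝᵖ × ℝ, fix (x₀, y₀) ∈ ℝᵖ × ℝ, and for ε ∈ [0, δ) let H_ε = (1 − ε)H₀ + ε·δ_{(x₀,y₀)}. Suppose b : [0, δ) → ℝᵖ is differentiable at 0 (from the right) and satisfies for every ε the first-order condition (1 − ε)·E_{H₀}[ψ(y − x′b(ε))x] + ε·ψ(y₀ − x₀′b(ε))x₀ = 2λ·J′(b(ε)) (componentwise), where λ ≥ 0. Assume further that the map β ↦ E_{H₀}[ψ(y − x′β)x] is differentiable at b(0) with derivative −E_{H₀}[ψ′(y − x′b(0))xx′], that ψ is continuous, and that the matrix M = E_{H₀}[ψ′(y − x′b(0))xx′] + 2λ·diag(J″(b(0))) is invertible. Then b′(0) = M⁻¹·(ψ(y₀ − x₀′b(0))·x₀ − E_{H₀}[ψ(y − x′b(0))x]). -/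

import Mathlib

open MeasureTheory Matrix

/-- Proposition 1 of the paper: the influence function of the penalized
M-functional. If `b(ε)` solves the first-order condition of the penalized M-estimation
problem under the contaminated distribution `(1-ε)H₀ + ε·δ_{(x₀,y₀)}` and is right
differentiable at `0`, then its derivative at `0` equals
`M⁻¹·(ψ(y₀ - x₀'b(0))x₀ - E_{H₀}[ψ(y - x'b(0))x])` with
`M = E_{H₀}[ψ'(y - x'b(0))xx'] + 2λ·diag(J''(b(0)))`. -/
theorem influence_function_penalized_M_functional
    {p : ℕ} (H₀ : Measure ((Fin p → ℝ) × ℝ)) [IsProbabilityMeasure H₀]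
    (ρ ψ ψ' J J' J'' : ℝ → ℝ)
    (hρ : ∀ t : ℝ, HasDerivAt ρ (ψ t) t)
    (hψ : ∀ t : ℝ, HasDerivAt ψ (ψ' t) t)
    (hJ : ∀ t : ℝ, HasDerivAt J (J' t) t)
    (hJ' : ∀ t : ℝ, HasDerivAt J' (J'' t) t)
    (hψc : Continuous ψ)
    (lam : ℝ) (hlam : 0 ≤ lam)
    (x₀ : Fin p → ℝ) (y₀ : ℝ) (δ : ℝ) (hδ : 0 < δ)
    (b : ℝ → (Fin p → ℝ)) (D : Fin p → ℝ)
    (hb : HasDerivWithinAt b D (Set.Ici 0) 0)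
    (hFOC : ∀ ε ∈ Set.Ico (0 : ℝ) δ, ∀ i : Fin p,
      (1 - ε) * (∫ z, ψ (z.2 - z.1 ⬝ᵥ b ε) * z.1 i ∂H₀)
          + ε * (ψ (y₀ - x₀ ⬝ᵥ b ε) * x₀ i)
        = 2 * lam * J' (b ε i))
    (A : Matrix (Fin p) (Fin p) ℝ)
    (hA : ∀ i j : Fin p, A i j = ∫ z, ψ' (z.2 - z.1 ⬝ᵥ b 0) * z.1 i * z.1 j ∂H₀)
    (hG : HasFDerivAt
      (fun β : Fin p → ℝ => fun i : Fin p => ∫ z, ψ (z.2 - z.1 ⬝ᵥ β) * z.1 i ∂H₀)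
      (LinearMap.toContinuousLinearMap (Matrix.toLin' (-A))) (b 0))
    (M : Matrix (Fin p) (Fin p) ℝ)
    (hM : M = A + (2 * lam) • Matrix.diagonal (fun i => J'' (b 0 i)))
    (hMinv : IsUnit M.det) :
    D = M⁻¹.mulVec
      (fun i => ψ (y₀ - x₀ ⬝ᵥ b 0) * x₀ i - ∫ z, ψ (z.2 - z.1 ⬝ᵥ b 0) * z.1 i ∂H₀) := by
  set G : (Fin p → ℝ) → (Fin p → ℝ) :=
    fun β => fun i => ∫ z, ψ (z.2 - z.1 ⬝ᵥ β) * z.1 i ∂H₀ with hGdef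
  -- componentwise derivative of b
  have hbi : ∀ i : Fin p, HasDerivWithinAt (fun ε => b ε i) (D i) (Set.Ici 0) 0 := by
    intro i
    exact (ContinuousLinearMap.proj (R := ℝ) (φ := fun _ : Fin p => ℝ)
      i).hasFDerivAt.comp_hasDerivWithinAt 0 hb
  -- derivative of ε ↦ x₀ ⬝ᵥ b ε
  have hdot : HasDerivWithinAt (fun ε => x₀ ⬝ᵥ b ε) (x₀ ⬝ᵥ D) (Set.Ici 0) 0 := by
    simpa [dotProduct] using
      HasDerivWithinAt.fun_sum (u := Finset.univ)
        (fun i _ => ((hbi i).const_mul (x₀ i)))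
  -- derivative of ε ↦ ψ (y₀ - x₀ ⬝ᵥ b ε)
  have hpsi : HasDerivWithinAt (fun ε => ψ (y₀ - x₀ ⬝ᵥ b ε))
      (ψ' (y₀ - x₀ ⬝ᵥ b 0) * (0 - x₀ ⬝ᵥ D)) (Set.Ici 0) 0 :=
    (hψ (y₀ - x₀ ⬝ᵥ b 0)).comp_hasDerivWithinAt 0
      ((hasDerivWithinAt_const 0 (Set.Ici 0) y₀).sub hdot)
  -- derivative of ε ↦ G (b ε) i
  have hGi : ∀ i : Fin p, HasDerivWithinAt (fun ε => G (b ε) i)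
      (-(A.mulVec D i)) (Set.Ici 0) 0 := by
    intro i
    have h1 : HasFDerivAt (fun β => G β i)
        ((ContinuousLinearMap.proj (R := ℝ) (φ := fun _ : Fin p => ℝ) i).comp
          (LinearMap.toContinuousLinearMap (Matrix.toLin' (-A)))) (b 0) :=
      (ContinuousLinearMap.proj (R := ℝ) (φ := fun _ : Fin p => ℝ)
        i).hasFDerivAt.comp (b 0) hG
    have h2 := h1.comp_hasDerivWithinAt 0 hb
    simpa [Function.comp_def, Matrix.toLin'_apply, Matrix.neg_mulVec] using h2
  -- derivative of ε ↦ 2 λ J'(b ε i)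
  have hJi : ∀ i : Fin p, HasDerivWithinAt (fun ε => 2 * lam * J' (b ε i))
      (2 * lam * (J'' (b 0 i) * D i)) (Set.Ici 0) 0 := by
    intro i
    exact ((hJ' (b 0 i)).comp_hasDerivWithinAt 0 (hbi i)).const_mul (2 * lam)
  -- the full LHS of the FOC
  have key : ∀ i : Fin p,
      ((0 - 1) * G (b 0) i + (1 - 0) * (-(A.mulVec D i)))
        + ((1 : ℝ) * ψ (y₀ - x₀ ⬝ᵥ b 0) * x₀ i
            + (0 : ℝ) * (ψ' (y₀ - x₀ ⬝ᵥ b 0) * (0 - x₀ ⬝ᵥ D)) * x₀ i)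
        - 2 * lam * (J'' (b 0 i) * D i) = 0 := by
    intro i
    have hf : HasDerivWithinAt
        (fun ε => (1 - ε) * G (b ε) i + ε * (ψ (y₀ - x₀ ⬝ᵥ b ε) * x₀ i)
          - 2 * lam * J' (b ε i))
        (((0 - 1) * G (b 0) i + (1 - 0) * (-(A.mulVec D i)))
          + ((1 : ℝ) * ψ (y₀ - x₀ ⬝ᵥ b 0) * x₀ i
              + (0 : ℝ) * (ψ' (y₀ - x₀ ⬝ᵥ b 0) * (0 - x₀ ⬝ᵥ D)) * x₀ i)
          - 2 * lam * (J'' (b 0 i) * D i)) (Set.Ici 0) 0 := by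
      have hA1 : HasDerivWithinAt (fun ε : ℝ => (1 - ε) * G (b ε) i)
          ((0 - 1) * G (b 0) i + (1 - 0) * (-(A.mulVec D i))) (Set.Ici 0) 0 := by
        have := ((hasDerivWithinAt_const 0 (Set.Ici 0) (1:ℝ)).fun_sub
          (hasDerivWithinAt_id 0 (Set.Ici 0))).fun_mul (hGi i)
        simpa using this
      have hA2 : HasDerivWithinAt (fun ε : ℝ => ε * (ψ (y₀ - x₀ ⬝ᵥ b ε) * x₀ i))
          ((1 : ℝ) * ψ (y₀ - x₀ ⬝ᵥ b 0) * x₀ i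
            + (0 : ℝ) * (ψ' (y₀ - x₀ ⬝ᵥ b 0) * (0 - x₀ ⬝ᵥ D)) * x₀ i) (Set.Ici 0) 0 := by
        have := (hasDerivWithinAt_id (0:ℝ) (Set.Ici 0)).fun_mul (hpsi.mul_const (x₀ i))
        simpa [mul_assoc, mul_comm, mul_left_comm] using this
      exact (hA1.add hA2).sub (hJi i)
    -- the function is eventually 0 on the right of 0
    have hev : (fun ε => (1 - ε) * G (b ε) i + ε * (ψ (y₀ - x₀ ⬝ᵥ b ε) * x₀ i)
          - 2 * lam * J' (b ε i)) =ᶠ[nhdsWithin 0 (Set.Ici 0)] (fun _ => (0 : ℝ)) := by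
      filter_upwards [Ico_mem_nhdsGE hδ] with ε hε
      have := hFOC ε hε i
      simp only [hGdef]
      linarith
    have h0 : HasDerivWithinAt (fun _ : ℝ => (0 : ℝ))
        (((0 - 1) * G (b 0) i + (1 - 0) * (-(A.mulVec D i)))
          + ((1 : ℝ) * ψ (y₀ - x₀ ⬝ᵥ b 0) * x₀ i
              + (0 : ℝ) * (ψ' (y₀ - x₀ ⬝ᵥ b 0) * (0 - x₀ ⬝ᵥ D)) * x₀ i)
          - 2 * lam * (J'' (b 0 i) * D i)) (Set.Ici 0) 0 := by
      exact hf.congr_of_eventuallyEq hev.symm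
        (hev.eq_of_nhdsWithin Set.self_mem_Ici).symm
    have huniq : UniqueDiffWithinAt ℝ (Set.Ici (0:ℝ)) 0 :=
      uniqueDiffOn_Ici 0 0 (by simp)
    have hzero : HasDerivWithinAt (fun _ : ℝ => (0 : ℝ)) 0 (Set.Ici 0) 0 :=
      hasDerivWithinAt_const _ _ _
    have := huniq.eq_deriv _ h0 hzero
    linarith [this]
  -- rearrange into the linear system M.mulVec D = RHS
  have hsys : M.mulVec D
      = (fun i => ψ (y₀ - x₀ ⬝ᵥ b 0) * x₀ i - ∫ z, ψ (z.2 - z.1 ⬝ᵥ b 0) * z.1 i ∂H₀) := by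
    funext i
    have hk := key i
    have hMi : M.mulVec D i = A.mulVec D i + 2 * lam * (J'' (b 0 i) * D i) := by
      subst hM
      simp [Matrix.add_mulVec, Matrix.smul_mulVec, Matrix.mulVec_diagonal,
        mul_assoc]
    rw [hMi]
    have hG0 : G (b 0) i = ∫ z, ψ (z.2 - z.1 ⬝ᵥ b 0) * z.1 i ∂H₀ := rfl
    rw [hG0] at hk
    linarith
  rw [← hsys, Matrix.mulVec_mulVec, Matrix.nonsing_inv_mul M hMinv, Matrix.one_mulVec]
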